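/- Let X be a topological space and f : X → Y a continuous surjection onto a topological space Y that is skeletal. If player I has a winning strategy in the open-open game on X, then player I has a winning strategy in the open-open game on Y. -/

import Mathlib

/-- Player I has a winning strategy in the open-open game on `X`: there is a
function `μ` from finite sequences of player II's moves to nonempty open sets
such that for every play in which player II's moves `B n` are nonempty open
subsets of player I's moves prescribed by `μ`, the union `⋃ n, B n` is dense. -/
def WinningStrategyI (X : Type*) [TopologicalSpace X] : Prop :=
  ∃ μ : List (Set X) → Set X,
    (∀ l : List (Set X), IsOpen (μ l) ∧ (μ l).Nonempty) ∧
    ∀ B : ℕ → Set X,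
      (∀ n, IsOpen (B n) ∧ (B n).Nonempty ∧
        B n ⊆ μ (List.ofFn fun i : Fin n => B i)) →
      Dense (⋃ n, B n)

/-- If `f : X → Y` is a continuous skeletal surjection and player I
has a winning strategy in the open-open game on `X`, then player I has a winning
strategy in the open-open game on `Y`. -/
theorem winningStrategyI_of_skeletal_image
    {X Y : Type*} [TopologicalSpace X] [TopologicalSpace Y]
    (f : X → Y) (hc : Continuous f) (hs : Function.Surjective f)
    (hskel : ∀ U : Set X, IsOpen U → U.Nonempty →
      (interior (closure (f '' U))).Nonempty)
    (hX : WinningStrategyI X) :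
    WinningStrategyI Y := by
  obtain ⟨μ, hμ, hwin⟩ := hX
  classical
  set step : List (Set X) → Set Y → List (Set X) :=
    fun acc W => acc ++ [μ acc ∩ f ⁻¹' W] with hstep
  refine ⟨fun l => interior (closure (f '' μ (l.foldl step []))), ?_, ?_⟩
  · intro l
    exact ⟨isOpen_interior, hskel _ (hμ _).1 (hμ _).2⟩
  · intro B hB
    set C : ℕ → Set X := fun n =>
      μ ((List.ofFn fun i : Fin n => B i).foldl step []) ∩ f ⁻¹' (B n) with hCdef
    have key : ∀ n, (List.ofFn fun i : Fin n => B i).foldl step []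
        = List.ofFn fun i : Fin n => C i := by
      intro n
      induction n with
      | zero => simp
      | succ n ih =>
        rw [List.ofFn_succ' (f := fun i : Fin (n+1) => B i),
            List.ofFn_succ' (f := fun i : Fin (n+1) => C i)]
        simp only [List.concat_eq_append, List.foldl_append, List.foldl_cons,
          List.foldl_nil, Fin.coe_castSucc, Fin.val_last]
        rw [ih]
        simp only [hstep, hCdef, ih]
        simp only [hstep, hCdef] at ih; rw [ih]
    have hC : ∀ n, IsOpen (C n) ∧ (C n).Nonempty ∧
        C n ⊆ μ (List.ofFn fun i : Fin n => C i) := by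
      intro n
      obtain ⟨hBo, hBne, hBsub⟩ := hB n
      have hμn := hμ ((List.ofFn fun i : Fin n => B i).foldl step [])
      refine ⟨hμn.1.inter (hBo.preimage hc), ?_, ?_⟩
      · obtain ⟨y, hy⟩ := hBne
        have hcl : y ∈ closure (f '' μ ((List.ofFn fun i : Fin n => B i).foldl step [])) :=
          interior_subset (hBsub hy)
        obtain ⟨z, hz1, hz2⟩ := (mem_closure_iff.mp hcl) (B n) hBo hy
        obtain ⟨x, hx, rfl⟩ := hz2
        exact ⟨x, hx, hz1⟩
      · rw [← key n]
        exact Set.inter_subset_left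
    have hdense := hwin C hC
    rw [dense_iff_inter_open]
    intro V hV hVne
    obtain ⟨y, hy⟩ := hVne
    obtain ⟨x, rfl⟩ := hs y
    obtain ⟨x', hx'V, hx'U⟩ := (dense_iff_inter_open.mp hdense) (f ⁻¹' V)
      (hV.preimage hc) ⟨x, hy⟩
    obtain ⟨n, hn⟩ := Set.mem_iUnion.mp hx'U
    exact ⟨f x', hx'V, Set.mem_iUnion.2 ⟨n, hn.2⟩⟩
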